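/- Let $m\geq 1$, $z=\exp(i\pi/m)$, $0\leq k_1 < \cdots < k_m \leq 2m-1$, $\varkappa = \sum_j k_j$. With $\mathbb{P}_{\beta\alpha} = \frac{1}{1+z^{\beta-\alpha}}$ and $\mathbb{B} = \mathbb{W}\,\mathrm{diag}[(-1)^{k_1},\dots,(-1)^{k_m}]\,\mathbb{W}^{-1}$ ($\mathbb{W}$ the Vandermonde matrix of $z^{k_1},\dots,z^{k_m}$): $-\frac{1}{2m}\,\mathrm{Sp}(\mathbb{P}\mathbb{B}) = -\Big(\frac{m}{2} - \frac{1}{4} - \frac{\varkappa}{2m}\Big)$. -/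

import Mathlib

open Complex Matrix Finset

private lemma aux_gen (y : ℂ) (n : ℕ) :
    (y - 1) * ∑ r ∈ Finset.range n, (r : ℂ) * y ^ r
      = ((n : ℂ) - 1) * y ^ n - ∑ r ∈ Finset.range n, y ^ r + 1 := by
  induction n with
  | zero => simp
  | succ n ih =>
    rw [Finset.sum_range_succ, Finset.sum_range_succ]
    push_cast
    ring_nf
    ring_nf at ih
    linear_combination ih

private lemma aux_sum_ry (n : ℕ) (y : ℂ) (h1 : y ≠ 1) (hn : y ^ n = 1) :
    (y - 1) * ∑ r ∈ Finset.range n, (r : ℂ) * y ^ r = n := by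
  have hg : ∑ r ∈ Finset.range n, y ^ r = 0 := by
    rw [geom_sum_eq h1, hn]; simp
  rw [aux_gen, hn, hg]; ring

private lemma aux_zpow_one (m : ℕ) (hm : 1 ≤ m) (t : ℤ) :
    Complex.exp (Real.pi * Complex.I / m) ^ t = 1 ↔ (2 * (m : ℤ)) ∣ t := by
  have hm0 : (m : ℂ) ≠ 0 := Nat.cast_ne_zero.mpr (by omega)
  have hπ : (Real.pi : ℂ) ≠ 0 := Complex.ofReal_ne_zero.mpr Real.pi_ne_zero
  have hI := Complex.I_ne_zero
  rw [← Complex.exp_int_mul, Complex.exp_eq_one_iff]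
  constructor
  · rintro ⟨j, hj⟩
    refine ⟨j, ?_⟩
    have h2 : ((t : ℂ) - 2 * j * m) * (Real.pi * Complex.I) = 0 := by
      field_simp at hj
      linear_combination (↑Real.pi * Complex.I) * hj
    rcases mul_eq_zero.mp h2 with h | h
    · have : (t : ℂ) = ((2 * (m:ℤ) * j : ℤ) : ℂ) := by push_cast; linear_combination h
      exact_mod_cast this
    · rcases mul_eq_zero.mp h with h' | h' <;> [exact absurd h' hπ; exact absurd h' hI]
  · rintro ⟨j, rfl⟩
    refine ⟨j, ?_⟩
    push_cast
    field_simp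

private lemma aux_int_bound (M c s : ℤ) (hM : 0 < M) (hs1 : -M < s) (hs2 : s < M)
    (hc : s = M * c) : s = 0 := by
  rcases lt_trichotomy c 0 with h | h | h
  · have h2 : M * c ≤ -M := by nlinarith
    exfalso; rw [hc] at hs1; linarith
  · rw [h, mul_zero] at hc; exact hc
  · have h2 : M ≤ M * c := by nlinarith
    exfalso; rw [hc] at hs2; linarith

theorem stmt_17 (m : ℕ) (hm : 1 ≤ m) (k : Fin m → ℕ)
    (hmono : StrictMono k) (hk : ∀ j, k j ≤ 2 * m - 1)
    (z : ℂ) (hz : z = Complex.exp (Real.pi * Complex.I / m))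
    (W : Matrix (Fin m) (Fin m) ℂ)
    (hW : W = (Matrix.vandermonde (fun j : Fin m => z ^ k j))ᵀ)
    (B : Matrix (Fin m) (Fin m) ℂ)
    (hB : B = W * Matrix.diagonal (fun j : Fin m => ((-1 : ℂ)) ^ k j) * W⁻¹)
    (P : Matrix (Fin m) (Fin m) ℂ)
    (hP : P = Matrix.of (fun β α : Fin m => 1 / (1 + z ^ ((β : ℤ) - (α : ℤ)))))
    (κ : ℕ) (hκ : κ = ∑ j, k j) :
    -(1 / (2 * (m : ℂ))) * (P * B).trace =
      -((m : ℂ) / 2 - 1 / 4 - (κ : ℂ) / (2 * m)) := by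
  have hm0 : (m : ℂ) ≠ 0 := Nat.cast_ne_zero.mpr (by omega)
  have hn0 : ((2 * m : ℕ) : ℂ) ≠ 0 := Nat.cast_ne_zero.mpr (by omega)
  have hz0 : z ≠ 0 := by rw [hz]; exact Complex.exp_ne_zero _
  have hzone : ∀ t : ℤ, z ^ t = 1 ↔ (2 * (m : ℤ)) ∣ t := by
    intro t; rw [hz]; exact aux_zpow_one m hm t
  have hzm : z ^ m = -1 := by
    have h1 : ((m : ℂ)) * (Real.pi * Complex.I / m) = Real.pi * Complex.I := by
      field_simp
    rw [hz, ← Complex.exp_nat_mul, h1, Complex.exp_pi_mul_I]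
  have hz2m : z ^ (2 * m) = 1 := by
    rw [mul_comm 2 m, pow_mul, hzm]; norm_num
  -- matrices
  set F : Matrix (Fin m) (Fin (2 * m)) ℂ :=
    Matrix.of (fun (i : Fin m) (r : Fin (2 * m)) => z ^ ((i : ℕ) * (r : ℕ))) with hFdef
  set G : Matrix (Fin (2 * m)) (Fin m) ℂ :=
    Matrix.of (fun (r : Fin (2 * m)) (a : Fin m) =>
      ((2 * m : ℕ) : ℂ)⁻¹ * (z⁻¹) ^ ((r : ℕ) * (a : ℕ))) with hGdef
  set Dt : Matrix (Fin (2 * m)) (Fin (2 * m)) ℂ :=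
    Matrix.diagonal (fun r : Fin (2 * m) => (-1 : ℂ) ^ (r : ℕ)) with hDtdef
  set Dn : Matrix (Fin (2 * m)) (Fin (2 * m)) ℂ :=
    Matrix.diagonal (fun r : Fin (2 * m) => ((r : ℕ) : ℂ)) with hDndef
  have hkf : ∀ j, k j < 2 * m := fun j => by have := hk j; omega
  set kf : Fin m → Fin (2 * m) := fun j => ⟨k j, hkf j⟩ with hkfdef
  set Sel : Matrix (Fin (2 * m)) (Fin m) ℂ :=
    Matrix.of (fun (r : Fin (2 * m)) (j : Fin m) => if r = kf j then (1 : ℂ) else 0) with hSeldef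
  set D : Matrix (Fin m) (Fin m) ℂ :=
    Matrix.diagonal (fun j : Fin m => (-1 : ℂ) ^ k j) with hDdef
  set Dk : Matrix (Fin m) (Fin m) ℂ :=
    Matrix.diagonal (fun j : Fin m => ((k j : ℕ) : ℂ)) with hDkdef
  -- W = F * Sel
  have hWF : W = F * Sel := by
    ext i j
    rw [hW, Matrix.mul_apply]
    simp only [hFdef, hSeldef, Matrix.of_apply, mul_ite, mul_one, mul_zero]
    rw [Finset.sum_ite_eq' Finset.univ (kf j) (fun r => z ^ ((i : ℕ) * (r : ℕ)))]
    simp only [Finset.mem_univ, if_true]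
    show (Matrix.vandermonde fun j : Fin m => z ^ k j) j i = z ^ ((i : ℕ) * (k j))
    rw [Matrix.vandermonde_apply, ← pow_mul, Nat.mul_comm]
  -- Dt * Sel = Sel * D
  have hDtSel : Dt * Sel = Sel * D := by
    ext r j
    rw [hDtdef, hDdef, Matrix.diagonal_mul, Matrix.mul_diagonal]
    simp only [hSeldef, Matrix.of_apply]
    by_cases h : r = kf j
    · subst h; simp [hkfdef]
    · simp [h]
  -- D * D = 1
  have hDD : D * D = 1 := by
    rw [hDdef, Matrix.diagonal_mul_diagonal]
    convert Matrix.diagonal_one with j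
    rw [← mul_pow]; norm_num
  -- F * Dn * Sel = (F * Sel) * Dk
  have hFDnSel : F * Dn * Sel = (F * Sel) * Dk := by
    ext i j
    rw [Matrix.mul_apply, Matrix.mul_diagonal, Matrix.mul_apply, Finset.sum_mul]
    apply Finset.sum_congr rfl
    intro r _
    rw [Matrix.mul_diagonal]
    simp only [hSeldef, hDndef, hDkdef, hFdef, Matrix.of_apply]
    by_cases h : r = kf j
    · subst h; simp [hkfdef]
    · simp [h]
  -- z-powers injectivity
  have hzne : ∀ r r' : ℕ, r < 2 * m → r' < 2 * m → r ≠ r' →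
      (z⁻¹) ^ r * z ^ r' ≠ 1 := by
    intro r r' hr hr' hne h
    have hx : z ^ ((r' : ℤ) - (r : ℤ)) = 1 := by
      rw [zpow_sub₀ hz0, zpow_natCast, zpow_natCast, div_eq_mul_inv, ← inv_pow, mul_comm]
      exact h
    rcases (hzone _).mp hx with ⟨c, hc⟩
    have := aux_int_bound (2 * (m : ℤ)) c ((r' : ℤ) - (r : ℤ)) (by omega) (by omega) (by omega) hc
    omega
  -- (G * F) entries
  have hGF : ∀ r r' : Fin (2 * m), (G * F) r r' =
      ((2 * m : ℕ) : ℂ)⁻¹ * ∑ i ∈ Finset.range m, ((z⁻¹) ^ (r : ℕ) * z ^ (r' : ℕ)) ^ i := by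
    intro r r'
    rw [Matrix.mul_apply, Finset.mul_sum, ← Fin.sum_univ_eq_sum_range
      (fun i => ((2 * m : ℕ) : ℂ)⁻¹ * ((z⁻¹) ^ (r : ℕ) * z ^ (r' : ℕ)) ^ i) m]
    apply Finset.sum_congr rfl
    intro i _
    simp only [hGdef, hFdef, Matrix.of_apply]
    rw [mul_pow, ← pow_mul, ← pow_mul, mul_assoc, Nat.mul_comm (i : ℕ) (r' : ℕ)]
  have hGFdiag : ∀ r : Fin (2 * m), (G * F) r r = ((2 * m : ℕ) : ℂ)⁻¹ * m := by
    intro r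
    rw [hGF]
    congr 1
    rw [inv_pow, inv_mul_cancel₀ (pow_ne_zero _ hz0)]
    simp
  -- Dt * (G * F) = (1 - G * F) * Dt
  have hDtGF : Dt * (G * F) = (1 - G * F) * Dt := by
    ext r r'
    rw [hDtdef, Matrix.diagonal_mul, Matrix.mul_diagonal]
    by_cases hrr : r = r'
    · subst hrr
      have h5 : ((2 * m : ℕ) : ℂ)⁻¹ * (m : ℂ) = 1 - ((2 * m : ℕ) : ℂ)⁻¹ * m := by
        field_simp
        push_cast
        ring
      rw [Matrix.sub_apply, Matrix.one_apply_eq, hGFdiag, ← h5]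
      ring
    · rw [Matrix.sub_apply, Matrix.one_apply_ne hrr]
      have hnat : (r : ℕ) ≠ (r' : ℕ) := fun h => hrr (Fin.ext h)
      by_cases hpar : (-1 : ℂ) ^ (r : ℕ) = (-1 : ℂ) ^ (r' : ℕ)
      · have hx1 : ((z⁻¹) ^ (r : ℕ) * z ^ (r' : ℕ)) ≠ 1 :=
          hzne _ _ r.isLt r'.isLt hnat
        have hxm : ((z⁻¹) ^ (r : ℕ) * z ^ (r' : ℕ)) ^ m = 1 := by
          rw [mul_pow, ← pow_mul, ← pow_mul, Nat.mul_comm (r : ℕ) m, Nat.mul_comm (r' : ℕ) m,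
            pow_mul, pow_mul, inv_pow, hzm]
          rw [inv_neg, inv_one, hpar, ← mul_pow]
          norm_num
        have h0 : (G * F) r r' = 0 := by
          rw [hGF, geom_sum_eq hx1, hxm]
          simp
        rw [h0]; simp
      · have h1 : (-1 : ℂ) ^ (r : ℕ) = -(-1 : ℂ) ^ (r' : ℕ) := by
          rcases neg_one_pow_eq_or ℂ (r : ℕ) with h | h <;>
            rcases neg_one_pow_eq_or ℂ (r' : ℕ) with h' | h'
          · exact absurd (h.trans h'.symm) hpar
          · rw [h, h']; try ring
          · rw [h, h']; try ring
          · exact absurd (h.trans h'.symm) hpar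
        rw [h1]; ring
  -- P = -(F * Dt * Dn * G)
  have hPF : P = -(F * Dt * Dn * G) := by
    ext β α
    set x := z ^ (β : ℕ) * (z⁻¹) ^ (α : ℕ) with hxdef
    have hterm : ∀ r : Fin (2 * m),
        (F * Dt * Dn) β r * G r α =
          ((2 * m : ℕ) : ℂ)⁻¹ * (((r : ℕ) : ℂ) * (-x) ^ (r : ℕ)) := by
      intro r
      rw [hDtdef, hDndef, Matrix.mul_diagonal, Matrix.mul_diagonal]
      simp only [hFdef, hGdef, Matrix.of_apply]
      rw [neg_pow x, hxdef, mul_pow, ← pow_mul, ← pow_mul,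
        Nat.mul_comm (α : ℕ) (r : ℕ), Nat.mul_comm (β : ℕ) (r : ℕ)]
      ring
    have hzx : z ^ ((β : ℤ) - (α : ℤ)) = x := by
      rw [zpow_sub₀ hz0, zpow_natCast, zpow_natCast, div_eq_mul_inv, ← inv_pow]
    have hβ := β.isLt
    have hα := α.isLt
    have hxne : x ≠ -1 := by
      intro h
      have h2 : z ^ ((β : ℤ) - (α : ℤ) - (m : ℤ)) = 1 := by
        rw [zpow_sub₀ hz0, hzx, h, zpow_natCast, hzm]
        norm_num
      rcases (hzone _).mp h2 with ⟨c, hc⟩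
      have := aux_int_bound (2 * (m : ℤ)) c ((β : ℤ) - (α : ℤ) - (m : ℤ))
        (by omega) (by omega) (by omega) hc
      omega
    have h1x : (1 : ℂ) + x ≠ 0 := fun h => hxne (by linear_combination h)
    have hyne : -x ≠ 1 := fun h => hxne (by linear_combination -h)
    have hyn : (-x) ^ (2 * m) = 1 := by
      rw [Even.neg_pow ⟨m, by ring⟩, hxdef, mul_pow, ← pow_mul, ← pow_mul,
        Nat.mul_comm (β : ℕ) (2 * m), Nat.mul_comm (α : ℕ) (2 * m),
        pow_mul z (2 * m) (β : ℕ), pow_mul z⁻¹ (2 * m) (α : ℕ), inv_pow, hz2m]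
      simp
    have hsum := aux_sum_ry (2 * m) (-x) hyne hyn
    rw [hP, Matrix.neg_apply, Matrix.mul_apply]
    simp only [Matrix.of_apply]
    rw [hzx]
    rw [Finset.sum_congr rfl (fun r _ => hterm r)]
    rw [← Fin.sum_univ_eq_sum_range
      (fun r => ((r : ℕ) : ℂ) * (-x) ^ r) (2 * m)] at hsum
    rw [← Finset.mul_sum]
    have hne2 : -x - 1 ≠ 0 := fun h => hyne (by linear_combination h)
    field_simp
    field_simp at hsum
    linear_combination -hsum
  -- invertibility of W
  have hdet : IsUnit W.det := by
    rw [hW, Matrix.det_transpose, Matrix.det_vandermonde, isUnit_iff_ne_zero,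
      Finset.prod_ne_zero_iff]
    intro i _
    rw [Finset.prod_ne_zero_iff]
    intro j hj
    rw [Finset.mem_Ioi] at hj
    rw [sub_ne_zero]
    intro h
    have hkij : k i < k j := hmono hj
    have h2 : (z⁻¹) ^ (k i) * z ^ (k j) ≠ 1 := hzne _ _ (hkf i) (hkf j) (by omega)
    apply h2
    rw [h, inv_pow, inv_mul_cancel₀ (pow_ne_zero _ hz0)]
  have hWinv : W * W⁻¹ = 1 := Matrix.mul_nonsing_inv W hdet
  have hinvW : W⁻¹ * W = 1 := Matrix.nonsing_inv_mul W hdet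
  -- main chain
  have hB2 : B * F = F * (Sel * (D * (W⁻¹ * F))) := by
    rw [hB, hWF]; simp only [Matrix.mul_assoc]
  have hDnDt : Dt * Dn = Dn * Dt := by
    rw [hDtdef, hDndef, Matrix.diagonal_mul_diagonal, Matrix.diagonal_mul_diagonal]
    apply congrArg; funext r; ring
  have e1 : G * (B * F) = (G * F) * (Sel * (D * (W⁻¹ * F))) := by
    rw [hB2]; simp only [Matrix.mul_assoc]
  have e3 : Dt * (Sel * (D * (W⁻¹ * F))) = Sel * (W⁻¹ * F) := by
    rw [← Matrix.mul_assoc Dt, hDtSel, Matrix.mul_assoc Sel D, ← Matrix.mul_assoc D D, hDD,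
      Matrix.one_mul]
  have e4 : (G * F) * (Sel * (W⁻¹ * F)) = G * F := by
    calc (G * F) * (Sel * (W⁻¹ * F)) = G * ((F * Sel) * (W⁻¹ * F)) := by
          simp only [Matrix.mul_assoc]
      _ = G * (W * W⁻¹ * F) := by rw [← hWF, Matrix.mul_assoc W]
      _ = G * F := by rw [hWinv, Matrix.one_mul]
  have t3 : Dt * (G * (B * F)) = Sel * (W⁻¹ * F) - G * F := by
    rw [e1, ← Matrix.mul_assoc Dt, hDtGF, Matrix.mul_assoc, e3, Matrix.sub_mul, Matrix.one_mul,
      e4]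
  have t1 : (P * B).trace = -((Dn * (Dt * (G * (B * F)))).trace) := by
    rw [hPF, Matrix.neg_mul, Matrix.trace_neg, neg_inj]
    rw [show F * Dt * Dn * G * B = F * (Dt * (Dn * (G * B))) from by simp only [Matrix.mul_assoc]]
    rw [Matrix.trace_mul_comm]
    rw [show Dt * (Dn * (G * B)) * F = Dt * Dn * (G * (B * F)) from by
      simp only [Matrix.mul_assoc]]
    rw [hDnDt, Matrix.mul_assoc]
  have t4 : (P * B).trace = -((Dn * (Sel * (W⁻¹ * F))).trace) + (Dn * (G * F)).trace := by
    rw [t1, t3, Matrix.mul_sub, Matrix.trace_sub]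
    ring
  have tr1 : (Dn * (Sel * (W⁻¹ * F))).trace = (κ : ℂ) := by
    rw [← Matrix.mul_assoc Dn, Matrix.trace_mul_comm]
    rw [show (W⁻¹ * F) * (Dn * Sel) = W⁻¹ * (F * Dn * Sel) from by simp only [Matrix.mul_assoc]]
    rw [hFDnSel, ← hWF, ← Matrix.mul_assoc, hinvW, Matrix.one_mul, hDkdef,
      Matrix.trace_diagonal, hκ]
    push_cast
    rfl
  have tr2 : (Dn * (G * F)).trace = (2 * (m : ℂ) * m - m) * (((2 * m : ℕ) : ℂ)⁻¹ * m) := by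
    have hdiag : ∀ r : Fin (2 * m), (Dn * (G * F)) r r
        = ((r : ℕ) : ℂ) * (((2 * m : ℕ) : ℂ)⁻¹ * m) := by
      intro r
      rw [hDndef, Matrix.diagonal_mul, hGFdiag]
    have hsums : (∑ r : Fin (2 * m), ((r : ℕ) : ℂ)) = 2 * (m : ℂ) * m - m := by
      have h1 : (1 : ℕ) ≤ 2 * m := by omega
      have h4 := congrArg (fun x : ℕ => (x : ℂ)) (Finset.sum_range_id_mul_two (2 * m))
      push_cast [Nat.cast_sub h1] at h4
      rw [Fin.sum_univ_eq_sum_range (fun i => ((i : ℕ) : ℂ)) (2 * m)]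
      linear_combination h4 / 2
    rw [Matrix.trace]
    simp only [Matrix.diag_apply]
    rw [Finset.sum_congr rfl (fun r _ => hdiag r), ← Finset.sum_mul, hsums]
  rw [t4, tr1, tr2]
  push_cast
  field_simp
  ring
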